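/- Let p : E → B be an arc-hedgehog covering with E a Peano space. Then p is regular (every loop in B has all lifts loops or all lifts non-loops) if and only if the deck transformation group of p acts transitively on each fiber of p. -/

import Mathlib

open unitInterval Topology

set_option linter.unnecessarySimpa false

universe u v w

/-- `p : E → B` is an arc-covering: unique lifting of paths given the initial point. -/
def IsArcCovering {E : Type*} {B : Type*} [TopologicalSpace E] [TopologicalSpace B]
    (p : C(E, B)) : Prop :=
  ∀ (e₀ : E) (f : C(I, B)), f 0 = p e₀ →
    ∃! g : C(I, E), p.comp g = f ∧ g 0 = e₀

/-- The relation identifying the wedge points of a wedge of copies of `(A, a₀)` indexed by `S`. -/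
def wedgeRel (S A : Type*) (a₀ : A) (x y : S × A) : Prop :=
  x = y ∨ (x.2 = a₀ ∧ y.2 = a₀)

/-- The wedge (one-point union) of copies of `(A, a₀)` indexed by `S`. -/
def Wedge (S A : Type*) (a₀ : A) : Type _ :=
  Quot (wedgeRel S A a₀)

/-- The topology of a directed wedge: a set is open iff its trace on each copy of `A`
is open, and if it contains the wedge point then it contains all copies of `A`
beyond some index. -/
instance Wedge.instTopologicalSpace (S A : Type*) (a₀ : A) [Preorder S]
    [IsDirected S (· ≤ ·)] [TopologicalSpace A] : TopologicalSpace (Wedge S A a₀) where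
  IsOpen U := (∀ s : S, IsOpen {a : A | Quot.mk (wedgeRel S A a₀) (s, a) ∈ U}) ∧
    ((∃ s : S, Quot.mk (wedgeRel S A a₀) (s, a₀) ∈ U) →
      ∃ t : S, ∀ s : S, t < s → ∀ a : A, Quot.mk (wedgeRel S A a₀) (s, a) ∈ U)
  isOpen_univ := by
    refine ⟨fun s => ?_, fun h => ?_⟩
    · exact isOpen_univ
    · obtain ⟨s, -⟩ := h
      exact ⟨s, fun _ _ _ => trivial⟩
  isOpen_inter := by
    rintro U V ⟨hU1, hU2⟩ ⟨hV1, hV2⟩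
    refine ⟨fun s => (hU1 s).inter (hV1 s), fun h => ?_⟩
    obtain ⟨tU, htU⟩ := hU2 ⟨h.choose, h.choose_spec.1⟩
    obtain ⟨tV, htV⟩ := hV2 ⟨h.choose, h.choose_spec.2⟩
    obtain ⟨t, ht1, ht2⟩ := directed_of (· ≤ ·) tU tV
    exact ⟨t, fun s hs a => ⟨htU s (lt_of_le_of_lt ht1 hs) a, htV s (lt_of_le_of_lt ht2 hs) a⟩⟩
  isOpen_sUnion := by
    intro C hC
    constructor
    · intro s
      have : {a : A | Quot.mk (wedgeRel S A a₀) (s, a) ∈ ⋃₀ C} =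
          ⋃ U ∈ C, {a : A | Quot.mk (wedgeRel S A a₀) (s, a) ∈ U} := by
        ext a
        simp only [Set.mem_setOf_eq, Set.mem_sUnion, Set.mem_iUnion, exists_prop]
        exact Iff.rfl
      rw [this]
      exact isOpen_biUnion fun U hU => (hC U hU).1 s
    · rintro ⟨s, hs⟩
      obtain ⟨U, hUC, hsU⟩ := hs
      obtain ⟨t, ht⟩ := (hC U hUC).2 ⟨s, hsU⟩
      exact ⟨t, fun s' hs' a => ⟨U, hUC, ht s' hs' a⟩⟩

/-- An arc-hedgehog over a directed set `S`: the directed wedge of copies of `([0,1], 0)`. -/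
def ArcHedgehog (S : Type*) : Type _ := Wedge S I 0

instance (S : Type*) [Preorder S] [IsDirected S (· ≤ ·)] : TopologicalSpace (ArcHedgehog S) :=
  Wedge.instTopologicalSpace S I 0

/-- `p` is an arc-hedgehog covering: maps from arc-hedgehogs lift uniquely. -/
def IsArcHedgehogCovering {E : Type*} {B : Type*} [TopologicalSpace E] [TopologicalSpace B]
    (p : C(E, B)) : Prop :=
  ∀ (S : Type u) [Preorder S] [IsDirected S (· ≤ ·)],
    ∀ (e₀ : E) (f : C(ArcHedgehog S, B)) (z₀ : ArcHedgehog S), f z₀ = p e₀ →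
      ∃! g : C(ArcHedgehog S, E), p.comp g = f ∧ g z₀ = e₀

/-- The closed unit `2`-disk. -/
noncomputable def Disk : Type := Metric.closedBall (0 : EuclideanSpace ℝ (Fin 2)) 1

noncomputable instance : TopologicalSpace Disk := by unfold Disk; infer_instance

/-- The center of the disk. -/
noncomputable def Disk.center : Disk := ⟨0, by simp⟩

/-- A disk-hedgehog over a directed set `S`: the directed wedge of copies of the pointed disk. -/
def DiskHedgehog (S : Type*) : Type _ := Wedge S Disk Disk.center

noncomputable instance (S : Type*) [Preorder S] [IsDirected S (· ≤ ·)] : TopologicalSpace (DiskHedgehog S) :=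
  Wedge.instTopologicalSpace S Disk Disk.center

/-- `p` is a disk-hedgehog covering: maps from disk-hedgehogs lift uniquely. -/
def IsDiskHedgehogCovering {E : Type*} {B : Type*} [TopologicalSpace E] [TopologicalSpace B]
    (p : C(E, B)) : Prop :=
  ∀ (S : Type u) [Preorder S] [IsDirected S (· ≤ ·)],
    ∀ (e₀ : E) (f : C(DiskHedgehog S, B)) (z₀ : DiskHedgehog S), f z₀ = p e₀ →
      ∃! g : C(DiskHedgehog S, E), p.comp g = f ∧ g z₀ = e₀

/-- `p` is a disk-covering: maps from the closed `2`-disk lift uniquely. -/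
def IsDiskCovering {E : Type*} {B : Type*} [TopologicalSpace E] [TopologicalSpace B]
    (p : C(E, B)) : Prop :=
  ∀ (e₀ : E) (f : C(Disk, B)) (d₀ : Disk), f d₀ = p e₀ →
    ∃! g : C(Disk, E), p.comp g = f ∧ g d₀ = e₀

/-- Path components of preimages of neighborhoods form a neighborhood basis of the
total space. -/
def HedgehogBasisCondition {E : Type*} {B : Type*} [TopologicalSpace E] [TopologicalSpace B]
    (p : C(E, B)) : Prop :=
  ∀ (e₀ : E) (U : Set E), IsOpen U → e₀ ∈ U →
    ∃ V ∈ 𝓝 (p e₀), {y : E | JoinedIn (p ⁻¹' V) e₀ y} ⊆ U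

/-- The monodromy relation on loops at `b₀`: two loops are identified iff any two of
their lifts starting at the same point end at the same point. -/
def MonodromyRel {E : Type*} {B : Type*} [TopologicalSpace E] [TopologicalSpace B]
    (p : C(E, B)) (b₀ : B) (α β : Path b₀ b₀) : Prop :=
  ∀ g h : C(I, E), (∀ t, p (g t) = α t) → (∀ t, p (h t) = β t) →
    g 0 = h 0 → g 1 = h 1

/-- `p` is regular: for each loop in `B`, all lifts are loops or all lifts are non-loops. -/
def IsRegularCovering {E : Type*} {B : Type*} [TopologicalSpace E] [TopologicalSpace B]
    (p : C(E, B)) : Prop :=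
  ∀ (b : B) (α : Path b b) (g h : C(I, E)),
    (∀ t, p (g t) = α t) → (∀ t, p (h t) = α t) → g 0 = g 1 → h 0 = h 1


section Aux
variable {E B : Type*} [TopologicalSpace E] [TopologicalSpace B] {p : C(E, B)}

variable (hp : IsArcCovering p)

noncomputable def liftCM (e : E) (f : C(I, B)) (hf : f 0 = p e) : C(I, E) :=
  (hp e f hf).choose

lemma liftCM_apply (e : E) (f : C(I, B)) (hf : f 0 = p e) (t : I) :
    p (liftCM hp e f hf t) = f t :=
  ContinuousMap.congr_fun (hp e f hf).choose_spec.1.1 t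

lemma liftCM_zero (e : E) (f : C(I, B)) (hf : f 0 = p e) :
    liftCM hp e f hf 0 = e :=
  (hp e f hf).choose_spec.1.2

lemma liftCM_unique (e : E) (f : C(I, B)) (hf : f 0 = p e) (g : C(I, E))
    (hg : ∀ t, p (g t) = f t) (h0 : g 0 = e) : g = liftCM hp e f hf :=
  (hp e f hf).choose_spec.2 g ⟨ContinuousMap.ext hg, h0⟩

lemma path_src {b₁ b₂ : B} (γ : Path b₁ b₂) {e : E} (he : b₁ = p e) :
    γ.toContinuousMap 0 = p e := γ.source.trans he

noncomputable def liftEndPt {b₁ b₂ : B} (γ : Path b₁ b₂) (e : E) (he : b₁ = p e) : E :=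
  liftCM hp e γ.toContinuousMap (path_src γ he) 1

noncomputable def liftPath {b₁ b₂ : B} (γ : Path b₁ b₂) (e : E) (he : b₁ = p e) :
    Path e (liftEndPt hp γ e he) :=
  ⟨liftCM hp e γ.toContinuousMap (path_src γ he), liftCM_zero hp e _ _, rfl⟩

lemma liftPath_apply {b₁ b₂ : B} (γ : Path b₁ b₂) (e : E) (he : b₁ = p e) (t : I) :
    p (liftPath hp γ e he t) = γ t :=
  liftCM_apply hp e _ (path_src γ he) t

lemma p_liftEndPt {b₁ b₂ : B} (γ : Path b₁ b₂) (e : E) (he : b₁ = p e) :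
    p (liftEndPt hp γ e he) = b₂ := by
  have := liftPath_apply hp γ e he 1
  simpa using this

lemma liftPath_unique {b₁ b₂ : B} (γ : Path b₁ b₂) (e : E) (he : b₁ = p e)
    {x : E} (g : Path e x) (hg : ∀ t, p (g t) = γ t) :
    ∀ t, g t = liftPath hp γ e he t := by
  intro t
  have := liftCM_unique hp e γ.toContinuousMap (path_src γ he) g.toContinuousMap
    (by simpa using hg) (by simp)
  exact ContinuousMap.congr_fun this t

lemma liftEndPt_congr {b₁ b₂ : B} {γ γ' : Path b₁ b₂} (h : γ = γ') (e : E) (he : b₁ = p e) :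
    liftEndPt hp γ e he = liftEndPt hp γ' e he := by subst h; rfl

lemma liftEndPt_refl (b : B) (e : E) (he : b = p e) :
    liftEndPt hp (Path.refl b) e he = e := by
  have := liftPath_unique hp (Path.refl b) e he (Path.refl e)
    (fun t => by simp [he]) 1
  simp only [Path.refl_apply] at this
  exact this.symm

lemma liftEndPt_trans {b₀ b₁ b₂ : B} (α : Path b₀ b₁) (β : Path b₁ b₂) (e : E)
    (he : b₀ = p e) :
    liftEndPt hp (α.trans β) e he =
      liftEndPt hp β (liftEndPt hp α e he) (p_liftEndPt hp α e he).symm := by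
  set y := liftEndPt hp α e he with hy
  set A := liftPath hp α e he
  set Bp := liftPath hp β y (p_liftEndPt hp α e he).symm
  have key : ∀ t, (A.trans Bp) t = liftPath hp (α.trans β) e he t := by
    apply liftPath_unique
    intro t
    rw [Path.trans_apply, Path.trans_apply]
    split_ifs with h
    · exact liftPath_apply hp α e he _
    · exact liftPath_apply hp β y _ _
  have := key 1
  simp only [Path.trans_apply] at this ⊢
  norm_num at this
  exact this.symm

end Aux
section Mono
variable {E B : Type*} [TopologicalSpace E] [TopologicalSpace B] {p : C(E, B)}

lemma mono (hp : IsArcCovering p) (hr : IsRegularCovering p) {e₁ e₂ x : E}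
    (he : p e₁ = p e₂) (γ γ' : Path e₁ x) :
    liftEndPt hp (γ.map p.continuous) e₂ he = liftEndPt hp (γ'.map p.continuous) e₂ he := by
  set pc := p.continuous with hpc
  set y := liftEndPt hp (γ.map pc) e₂ he with hy
  have hpy : p y = p x := p_liftEndPt hp (γ.map pc) e₂ he
  have he2 : p x = p y := hpy.symm
  set N := liftPath hp ((γ'.map pc).symm) y he2 with hN
  set L := liftPath hp (γ.map pc) e₂ he with hL
  set h := L.trans N with hh'
  set g := γ.trans γ'.symm with hg'
  set α : Path (p e₁) (p e₁) := (γ.map pc).trans ((γ'.map pc).symm) with hα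
  have hmap : (γ.trans γ'.symm).map pc = α := by
    rw [Path.map_trans, hα, Path.map_symm]
  have hg : ∀ t, p (g t) = α t := by
    intro t
    calc p (g t) = ((γ.trans γ'.symm).map pc) t := rfl
    _ = α t := by rw [hmap]
  have hhl : ∀ t, p (h t) = α t := by
    intro t
    rw [hh', hα, Path.trans_apply, Path.trans_apply]
    split_ifs with hcond
    · exact liftPath_apply hp (γ.map pc) e₂ he _
    · exact liftPath_apply hp ((γ'.map pc).symm) y he2 _
  have h01 : h 0 = h 1 := hr (p e₁) α g.toContinuousMap h.toContinuousMap
    (by simpa using hg) (by simpa using hhl) (by simp)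
  have hze : liftEndPt hp ((γ'.map pc).symm) y he2 = e₂ := by
    have h0 : h 0 = e₂ := h.source
    have h1 : h 1 = liftEndPt hp ((γ'.map pc).symm) y he2 := h.target
    rw [← h1, ← h01, h0]
  have key := liftCM_unique hp e₂ (γ'.map pc).toContinuousMap (path_src _ he)
    N.symm.toContinuousMap
    (fun t => by
      show p (N (σ t)) = (γ'.map pc) t
      rw [liftPath_apply hp ((γ'.map pc).symm) y he2 (σ t)]
      show (γ'.map pc) (σ (σ t)) = (γ'.map pc) t
      rw [unitInterval.symm_symm])
    (N.symm.source.trans hze)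
  have keval : N.symm 1 = liftEndPt hp (γ'.map pc) e₂ he := ContinuousMap.congr_fun key 1
  have hN0 : N.symm 1 = y := N.symm.target
  calc y = N.symm 1 := hN0.symm
  _ = liftEndPt hp (γ'.map pc) e₂ he := keval
end Mono
section Deck
variable {E B : Type*} [TopologicalSpace E] [TopologicalSpace B] {p : C(E, B)}
variable [PathConnectedSpace E]

noncomputable def deckFun (hp : IsArcCovering p) (e₁ e₂ : E) (he : p e₁ = p e₂) : E → E :=
  fun x => liftEndPt hp ((PathConnectedSpace.somePath e₁ x).map p.continuous) e₂ he

lemma deckFun_eq (hp : IsArcCovering p) (hr : IsRegularCovering p) {e₁ e₂ x : E}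
    (he : p e₁ = p e₂) (γ : Path e₁ x) :
    deckFun hp e₁ e₂ he x = liftEndPt hp (γ.map p.continuous) e₂ he :=
  mono hp hr he _ γ

lemma p_deckFun (hp : IsArcCovering p) {e₁ e₂ : E} (he : p e₁ = p e₂) (x : E) :
    p (deckFun hp e₁ e₂ he x) = p x :=
  p_liftEndPt hp _ e₂ he

lemma deckFun_self (hp : IsArcCovering p) (hr : IsRegularCovering p) {e₁ e₂ : E}
    (he : p e₁ = p e₂) : deckFun hp e₁ e₂ he e₁ = e₂ := by
  rw [deckFun_eq hp hr he (Path.refl e₁)]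
  have hm : (Path.refl e₁).map p.continuous = Path.refl (p e₁) := by ext t; rfl
  rw [liftEndPt_congr hp hm e₂ he]
  exact liftEndPt_refl hp (p e₁) e₂ he

lemma deckFun_left_inv (hp : IsArcCovering p) (hr : IsRegularCovering p) {e₁ e₂ : E}
    (he : p e₁ = p e₂) (x : E) :
    deckFun hp e₂ e₁ he.symm (deckFun hp e₁ e₂ he x) = x := by
  set γ := PathConnectedSpace.somePath e₁ x with hγ
  have hdx : deckFun hp e₁ e₂ he x = liftEndPt hp (γ.map p.continuous) e₂ he := rfl
  set L := (liftPath hp (γ.map p.continuous) e₂ he).cast rfl hdx with hLdef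
  rw [deckFun_eq hp hr he.symm L]
  have key := liftCM_unique hp e₁ (L.map p.continuous).toContinuousMap
    (path_src _ he.symm) γ.toContinuousMap
    (fun t => by
      show p (γ t) = p (L t)
      have : p (L t) = (γ.map p.continuous) t := by
        show p ((liftPath hp (γ.map p.continuous) e₂ he) t) = _
        exact liftPath_apply hp (γ.map p.continuous) e₂ he t
      rw [this]; rfl)
    γ.source
  exact (ContinuousMap.congr_fun key 1).symm.trans γ.target

lemma deckFun_continuous [LocallyPathConnectedSpace E] (hp : IsArcCovering p)
    (hr : IsRegularCovering p) (hbasis : HedgehogBasisCondition p) {e₁ e₂ : E}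
    (he : p e₁ = p e₂) : Continuous (deckFun hp e₁ e₂ he) := by
  rw [continuous_iff_continuousAt]
  intro x
  rw [continuousAt_def]
  intro U hU
  obtain ⟨U', hU'sub, hU'open, hxU'⟩ := mem_nhds_iff.mp hU
  obtain ⟨V, hV, hVsub⟩ := hbasis (deckFun hp e₁ e₂ he x) U' hU'open hxU'
  rw [p_deckFun hp he x] at hV
  have hxV : x ∈ p ⁻¹' interior V := mem_interior_iff_mem_nhds.mpr hV
  have hWopen : IsOpen (pathComponentIn (p ⁻¹' interior V) x) :=
    (isOpen_interior.preimage p.continuous).pathComponentIn x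
  refine Filter.mem_of_superset (hWopen.mem_nhds (mem_pathComponentIn_self hxV)) ?_
  intro w hw
  obtain ⟨δ, hδ⟩ : JoinedIn (p ⁻¹' interior V) x w := hw
  set γ := PathConnectedSpace.somePath e₁ x with hγ
  have h1 : deckFun hp e₁ e₂ he w = liftEndPt hp ((γ.trans δ).map p.continuous) e₂ he :=
    deckFun_eq hp hr he (γ.trans δ)
  rw [liftEndPt_congr hp (Path.map_trans γ δ p.continuous) e₂ he] at h1
  rw [liftEndPt_trans hp (γ.map p.continuous) (δ.map p.continuous) e₂ he] at h1
  have hstart : liftEndPt hp (γ.map p.continuous) e₂ he = deckFun hp e₁ e₂ he x := rfl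
  apply hU'sub
  apply hVsub
  show JoinedIn (p ⁻¹' V) (deckFun hp e₁ e₂ he x) (deckFun hp e₁ e₂ he w)
  refine ⟨(liftPath hp (δ.map p.continuous) (liftEndPt hp (γ.map p.continuous) e₂ he)
      (p_liftEndPt hp (γ.map p.continuous) e₂ he).symm).cast hstart.symm h1, ?_⟩
  intro t
  refine Set.mem_preimage.mpr ?_
  have hc : p (((liftPath hp (δ.map p.continuous) (liftEndPt hp (γ.map p.continuous) e₂ he)
      (p_liftEndPt hp (γ.map p.continuous) e₂ he).symm).cast hstart.symm h1) t)
      = (δ.map p.continuous) t :=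
    liftPath_apply hp (δ.map p.continuous) (liftEndPt hp (γ.map p.continuous) e₂ he)
      (p_liftEndPt hp (γ.map p.continuous) e₂ he).symm t
  rw [hc]
  exact interior_subset (hδ t)
end Deck


/-- an arc-hedgehog covering with Peano total space is regular iff its
deck transformation group acts transitively on each fiber. -/
theorem regular_iff_dtg_transitive {E B : Type*} [TopologicalSpace E] [TopologicalSpace B]
    [ConnectedSpace E] [LocallyPathConnectedSpace E]
    (p : C(E, B)) (hp : IsArcCovering p) (hbasis : HedgehogBasisCondition p) :
    IsRegularCovering p ↔
      ∀ e₁ e₂ : E, p e₁ = p e₂ →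
        ∃ h : E ≃ₜ E, (∀ x, p (h x) = p x) ∧ h e₁ = e₂ := by
  constructor
  · intro hr e₁ e₂ hpe
    haveI : PathConnectedSpace E := pathConnectedSpace_iff_connectedSpace.mpr inferInstance
    refine ⟨{ toFun := deckFun hp e₁ e₂ hpe
              invFun := deckFun hp e₂ e₁ hpe.symm
              left_inv := deckFun_left_inv hp hr hpe
              right_inv := deckFun_left_inv hp hr hpe.symm
              continuous_toFun := deckFun_continuous hp hr hbasis hpe
              continuous_invFun := deckFun_continuous hp hr hbasis hpe.symm },
      fun x => p_deckFun hp hpe x, deckFun_self hp hr hpe⟩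
  · intro ht b α g h hg hh hg01
    obtain ⟨φ, hφp, hφ⟩ := ht (g 0) (h 0) (by rw [hg 0, hh 0])
    have hu := hp (h 0) α.toContinuousMap (by simpa using (hh 0).symm)
    have e1 : (ContinuousMap.comp ⟨⇑φ, φ.continuous⟩ g) = h :=
      hu.unique ⟨ContinuousMap.ext fun t => (hφp (g t)).trans (hg t), hφ⟩
        ⟨ContinuousMap.ext hh, rfl⟩
    calc h 0 = φ (g 0) := hφ.symm
    _ = φ (g 1) := by rw [hg01]
    _ = h 1 := ContinuousMap.congr_fun e1 1
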